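/- Let Σ be a finite alphabet with |Σ| = σ ≥ 2, let ι and k be natural numbers with k > ι, and let a ∈ Σ. Then there exists a word w over Σ with alph(w) = Σ and ι(w) = ι such that for every word v ∈ Σ^k \ ScatFact_k(w), we have m(w)·a ∈ ScatFact_{ι+1}(v). -/

import Mathlib

open List

universe u
variable {α : Type u}

/-- `ScatFact k w` is the set of scattered factors (subsequences) of `w` of length exactly `k`. -/
def ScatFact (k : ℕ) (w : List α) : Set (List α) :=
  {v | v.length = k ∧ v.Sublist w}

/-- `w` is `k`-universal over the alphabet `S`: every word of length `k` over `S`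
is a scattered factor of `w`. -/
def IsKUniversal [DecidableEq α] (S : Finset α) (k : ℕ) (w : List α) : Prop :=
  ∀ v : List α, v.length = k → (∀ x ∈ v, x ∈ S) → v.Sublist w

/-- The universality index of `w` over the alphabet `S`: the largest `k` such that
`w` is `k`-universal over `S`. -/
noncomputable def univIdx [DecidableEq α] (S : Finset α) (w : List α) : ℕ :=
  sSup {k | IsKUniversal S k w}

/-- `IsArchFact S w inners modus rest` says that `w` has the arch factorization
`w = ar_1 ⋯ ar_n · rest` over the alphabet `S`, where the `i`-th arch is
`ar_i = inners[i] ++ [modus[i]]`: each arch contains every letter of `S`,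
the last letter of each arch occurs only once within the arch, and the
alphabet of the rest is a proper subset of `S`. -/
def IsArchFact [DecidableEq α] (S : Finset α) (w : List α)
    (inners : List (List α)) (modus : List α) (rest : List α) : Prop :=
  inners.length = modus.length ∧
  w = (List.zipWith (fun inn m => inn ++ [m]) inners modus).flatten ++ rest ∧
  (∀ p ∈ List.zip inners modus, ∀ x ∈ S, x ∈ p.1 ++ [p.2]) ∧
  (∀ p ∈ List.zip inners modus, p.2 ∉ p.1) ∧
  rest.toFinset ⊂ S

/-- `v` is perfect `k`-universal over `S`: `alph(v) = S`, the universality index of `v`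
over `S` is `k`, and the rest of its arch factorization over `S` is empty. -/
def IsPerfectUniv [DecidableEq α] (S : Finset α) (k : ℕ) (v : List α) : Prop :=
  v.toFinset = S ∧ univIdx S v = k ∧ ∃ inners modus, IsArchFact S v inners modus []

/-- `v` is minimal perfect `k`-universal over `S`. -/
def IsMinPerfectUniv [DecidableEq α] (S : Finset α) (k : ℕ) (v : List α) : Prop :=
  IsPerfectUniv S k v ∧ ∀ v' : List α, IsPerfectUniv S k v' → v.length ≤ v'.length

/-- `nextAlphPos w i s` (positions `1`-indexed): the least position `j` such that
`w[i+1..j]` contains exactly `s` distinct letters, or `none` (representing `-1`)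
if `w[i+1..|w|]` contains fewer than `s` distinct letters. -/
noncomputable def nextAlphPos [DecidableEq α] (w : List α) (i s : ℕ) : Option ℕ :=
  if (w.drop i).toFinset.card < s then none
  else some (sInf {j | ((w.drop i).take (j - i)).toFinset.card = s})

/-- The letter of `w` at (1-indexed) position `j`. -/
def letterAt [Inhabited α] (w : List α) (j : ℕ) : α := w.getD (j - 1) default

/-- The word over `Fin σ` with `ι` arches, whose first arch is `a_1 a_2 ⋯ a_σ`
and each later arch is the reverse of the previous one. -/
def wmin (σ ι : ℕ) : List (Fin σ) :=
  ((List.range ι).map (fun i =>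
    if i % 2 = 0 then List.finRange σ else (List.finRange σ).reverse)).flatten

lemma subl_flatten_replicate {c v : List α} {n : ℕ}
    (hc : ∀ x ∈ v, x ∈ c) (h : v.length ≤ n) :
    v <+ (List.replicate n c).flatten := by
  induction n generalizing v with
  | zero =>
    have : v = [] := List.length_eq_zero_iff.mp (Nat.le_zero.mp h)
    simp [this]
  | succ n ih =>
    cases v with
    | nil => exact List.nil_sublist _
    | cons x v' =>
      rw [List.replicate_succ, List.flatten_cons]
      have h1 : [x] <+ c := List.singleton_sublist.mpr (hc x (by simp))
      have h2 : v' <+ (List.replicate n c).flatten :=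
        ih (fun y hy => hc y (by simp [hy])) (Nat.succ_le_succ_iff.mp (by simpa using h))
      exact h1.append h2

lemma subl_w [DecidableEq α] {a : α} {l : List α} (hl : ∀ x : α, x ≠ a → x ∈ l)
    {k : ℕ} :
    ∀ (m : ℕ) (v : List α), v.count a ≤ m → v.length ≤ k →
      v <+ (List.replicate m ((List.replicate k l).flatten ++ [a])).flatten
            ++ (List.replicate k l).flatten := by
  intro m
  set u := (List.replicate k l).flatten with hu
  induction m with
  | zero =>
    intro v hcnt hlen
    have hav : a ∉ v := by
      intro hav
      have := List.count_pos_iff.mpr hav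
      omega
    have : v <+ u := subl_flatten_replicate
      (fun x hx => hl x (fun he => hav (he ▸ hx))) hlen
    simpa using this
  | succ m ih =>
    intro v hcnt hlen
    by_cases hav : a ∈ v
    · set t := v.takeWhile (fun x => decide (x ≠ a)) with ht
      set d := v.dropWhile (fun x => decide (x ≠ a)) with hd
      have hv : v = t ++ d := (List.takeWhile_append_dropWhile (l := v)).symm
      have htne : ∀ x ∈ t, x ≠ a := by
        intro x hx
        have := List.mem_takeWhile_imp hx
        simpa using this
      have hdne : d ≠ [] := by
        intro h0
        exact htne a (by rw [hv, h0, List.append_nil] at hav; exact hav) rfl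
      obtain ⟨y, d', hyd⟩ := List.exists_cons_of_ne_nil hdne
      have hya : y = a := by
        have h : (decide (d.head hdne ≠ a)) = false :=
          List.head_dropWhile_not (fun x => decide (x ≠ a)) (l := v) hdne
        simp only [hyd, List.head_cons] at h
        simpa using h
      rw [hya] at hyd
      have hta : a ∉ t := fun h => htne a h rfl
      have hcv : v.count a = d'.count a + 1 := by
        rw [hv, hyd, List.count_append, List.count_cons_self,
          List.count_eq_zero.mpr hta]
        omega
      have hlenv : v.length = t.length + d'.length + 1 := by
        rw [hv, hyd]; simp; omega
      have h2 : d' <+ (List.replicate m (u ++ [a])).flatten ++ u :=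
        ih _ (by omega) (by omega)
      have h1 : t <+ u := subl_flatten_replicate (fun x hx => hl x (htne x hx)) (by omega)
      have key : (t ++ [a]) ++ d' <+
          (u ++ [a]) ++ ((List.replicate m (u ++ [a])).flatten ++ u) :=
        (h1.append (List.Sublist.refl [a])).append h2
      rw [List.replicate_succ, List.flatten_cons, List.append_assoc]
      calc v = (t ++ [a]) ++ d' := by rw [hv, hyd]; simp
        _ <+ _ := key
    · have : v <+ u := subl_flatten_replicate
        (fun x hx => hl x (fun he => hav (he ▸ hx))) hlen
      exact this.trans (List.sublist_append_right _ u)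

lemma count_flatten_replicate [DecidableEq α] (a : α) (c : List α) (n : ℕ) :
    ((List.replicate n c).flatten).count a = n * c.count a := by
  induction n with
  | zero => simp
  | succ n ih => rw [List.replicate_succ, List.flatten_cons, List.count_append, ih]; ring


theorem stmt1 {α : Type u} [Fintype α] [DecidableEq α]
    (hsigma : 2 ≤ Fintype.card α) (iota k : ℕ) (hiota : 1 ≤ iota) (hk : iota < k) (a : α) :
    ∃ (w : List α) (inners : List (List α)) (modus : List α) (rest : List α),
      (∀ b : α, b ∈ w) ∧ univIdx Finset.univ w = iota ∧
      IsArchFact Finset.univ w inners modus rest ∧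
      ∀ v : List α, v.length = k → v ∉ ScatFact k w →
        (modus ++ [a]) ∈ ScatFact (iota + 1) v := by
  classical
  set l : List α := (Finset.univ.erase a).toList with hldef
  have hl : ∀ x : α, x ≠ a → x ∈ l := fun x hx => by
    simp [hldef, Finset.mem_toList, Finset.mem_erase, hx]
  have hal : a ∉ l := by simp [hldef]
  set u := (List.replicate k l).flatten with hudef
  have hau : a ∉ u := by
    rw [hudef]
    simp only [List.mem_flatten, not_exists, not_and]
    intro L hL
    rw [List.eq_of_mem_replicate hL]
    exact hal
  have hxu : ∀ x : α, x ≠ a → x ∈ u := fun x hx => by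
    rw [hudef, List.mem_flatten]
    exact ⟨l, List.mem_replicate.mpr ⟨by omega, rfl⟩, hl x hx⟩
  have hxc : ∀ x : α, x ∈ u ++ [a] := fun x => by
    by_cases h : x = a
    · simp [h]
    · exact List.mem_append_left _ (hxu x h)
  set w := (List.replicate iota (u ++ [a])).flatten ++ u with hwdef
  have hcw : w.count a = iota := by
    rw [hwdef, List.count_append, List.count_eq_zero.mpr hau,
      count_flatten_replicate, List.count_append, List.count_eq_zero.mpr hau]
    simp
  have hkuniv : ∀ j ≤ iota, IsKUniversal (Finset.univ : Finset α) j w := by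
    intro j hj v hvlen _
    have h1 : v <+ (List.replicate iota (u ++ [a])).flatten :=
      subl_flatten_replicate (fun x _ => hxc x) (by omega)
    exact h1.trans (List.sublist_append_left _ _)
  have huniv : univIdx (Finset.univ : Finset α) w = iota := by
    have hset : {j | IsKUniversal (Finset.univ : Finset α) j w} = Set.Iic iota := by
      ext j
      simp only [Set.mem_setOf_eq, Set.mem_Iic]
      constructor
      · intro hj
        have h1 : (List.replicate j a) <+ w := hj _ (by simp) (by simp)
        have h2 := h1.count_le a
        simpa [hcw] using h2
      · exact fun hj => hkuniv j hj
    rw [univIdx, hset, csSup_Iic]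
  refine ⟨w, List.replicate iota u, List.replicate iota a, u, ?_, huniv, ?_, ?_⟩
  · intro b
    by_cases hb : b = a
    · refine List.mem_append_left _ ?_
      rw [List.mem_flatten]
      exact ⟨u ++ [a], List.mem_replicate.mpr ⟨by omega, rfl⟩, by simp [hb]⟩
    · exact List.mem_append_right _ (hxu b hb)
  · refine ⟨by simp, ?_, ?_, ?_, ?_⟩
    · rw [hwdef]; simp [List.zipWith_replicate]
    · intro p hp x hx
      rw [List.zip_replicate] at hp
      rw [List.eq_of_mem_replicate hp]
      exact hxc x
    · intro p hp
      rw [List.zip_replicate] at hp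
      rw [List.eq_of_mem_replicate hp]
      exact hau
    · rw [Finset.ssubset_univ_iff]
      intro h
      have : a ∈ u.toFinset := h ▸ Finset.mem_univ a
      exact hau (List.mem_toFinset.mp this)
  · intro v hvlen hnv
    have hnsub : ¬ v <+ w := fun h => hnv ⟨hvlen, h⟩
    have hcnt : iota + 1 ≤ v.count a := by
      by_contra hc
      exact hnsub (by rw [hwdef, hudef]; exact subl_w hl iota v (by omega) (le_of_eq hvlen))
    have hrep : List.replicate (iota + 1) a <+ v :=
      List.replicate_sublist_iff.mpr hcnt
    refine ⟨by simp, ?_⟩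
    rw [List.replicate_succ'] at hrep
    exact hrep
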